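/- In the a posteriori reconstruction setting: let Rφ̄ (written R̄φ) and Ru be the reconstructions solving the continuous systems with discrete data y_h and u_h. Then for every x_h ∈ Q_ad^h: ⟨E_h(R̄φ − φ), y − y_h⟩_Q ≥ −⟨E_h(φ_h − R̄φ), y − y_h⟩_Q + ⟨E_h φ_h + λ y_h, y − x_h⟩_Q + λ‖y − y_h‖_Q². -/
import Mathlib


open RealInnerProductSpace

/-- Lemma 2.5: variational-inequality estimate with the adjoint reconstruction. -/
theorem stmt12 {V Q : Type*} [AddCommGroup V] [Module ℝ V]
    [NormedAddCommGroup Q] [InnerProductSpace ℝ Q]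
    (Eh : V →ₗ[ℝ] Q) (lam : ℝ) (hlam : 0 < lam)
    (Qad Qadh : Set Q) (hsub : Qadh ⊆ Qad)
    (hQad : Convex ℝ Qad) (hQadcl : IsClosed Qad)
    (φ φh Rφ : V) (y yh : Q) (hy : y ∈ Qad) (hyh : yh ∈ Qadh)
    (hVI : ∀ x ∈ Qad, 0 ≤ ⟪Eh φ + lam • y, x - y⟫)
    (hVIh : ∀ xh ∈ Qadh, 0 ≤ ⟪Eh φh + lam • yh, xh - yh⟫) :
    ∀ xh ∈ Qadh,
      -⟪Eh (φh - Rφ), y - yh⟫ + ⟪Eh φh + lam • yh, y - xh⟫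
          + lam * ‖y - yh‖ ^ 2
        ≤ ⟪Eh (Rφ - φ), y - yh⟫ := by
  intro xh hxh
  have h1 := hVI yh (hsub hyh)
  have h2 := hVIh xh hxh
  have hn : ⟪y - yh, y - yh⟫ = ‖y - yh‖ ^ 2 := real_inner_self_eq_norm_sq (y - yh)
  simp only [map_sub, inner_sub_left, inner_add_left, inner_sub_right,
    real_inner_smul_left] at h1 h2 hn ⊢
  nlinarith [h1, h2, hn]
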